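/- Let B ∈ ℂ^{n×k} have rank k (k ≤ n) with unique orthonormal polar factor P_*. For any P ∈ ℂ^{n×k} with orthonormal columns, let η = ‖B‖_tr − Re(tr(Pᴴ B)) and ε = √(2η / σ_min(B)). Then ‖sin Θ(R(P), R(P_*))‖_F ≤ ε. -/

import Mathlib

open scoped ComplexOrder
open Matrix

/-- The tuple `f` rearranged into decreasing order; `sortedDesc f 0` is the largest entry. -/
noncomputable def sortedDesc {m : ℕ} (f : Fin m → ℝ) : Fin m → ℝ :=
  fun i => (f ∘ Tuple.sort f) i.rev

/-- The singular values of a complex matrix, in decreasing order. -/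
noncomputable def sv {n k : ℕ} (B : Matrix (Fin n) (Fin k) ℂ) : Fin k → ℝ :=
  sortedDesc fun i =>
    Real.sqrt ((Matrix.posSemidef_conjTranspose_mul_self B).isHermitian.eigenvalues i)

/-- The trace (nuclear) norm: the sum of the singular values. -/
noncomputable def trNorm {n k : ℕ} (B : Matrix (Fin n) (Fin k) ℂ) : ℝ := ∑ i, sv B i

/-- The Frobenius norm. -/
noncomputable def frobNorm {n k : ℕ} (A : Matrix (Fin n) (Fin k) ℂ) : ℝ :=
  Real.sqrt (∑ i, ∑ j, ‖A i j‖ ^ 2)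

/-- `‖sin Θ(R(X), R(Y))‖_F` where `Θ` is the diagonal matrix of canonical angles
`θ_i = arccos σ_i(Xᴴ Y)` between the column spaces of `X` and `Y`. -/
noncomputable def sinThetaF {n k : ℕ} (X Y : Matrix (Fin n) (Fin k) ℂ) : ℝ :=
  Real.sqrt (∑ i, Real.sin (Real.arccos (sv (Xᴴ * Y) i)) ^ 2)

/-- The smallest singular value. -/
noncomputable def smin {n k : ℕ} (B : Matrix (Fin n) (Fin k) ℂ) : ℝ := ⨅ i, sv B i

/-- The spectral norm (largest singular value). -/
noncomputable def s2norm {n k : ℕ} (B : Matrix (Fin n) (Fin k) ℂ) : ℝ := ⨆ i, sv B i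

/-- The orthonormal polar factor `B (Bᴴ B)^{-1/2}` (for `B` of full column rank). -/
noncomputable def polarFactor {n k : ℕ} (B : Matrix (Fin n) (Fin k) ℂ) :
    Matrix (Fin n) (Fin k) ℂ :=
  B * ((Matrix.posSemidef_conjTranspose_mul_self B).isHermitian.eigenvectorUnitary.1 *
      diagonal ((↑) ∘ Real.sqrt ∘ (Matrix.posSemidef_conjTranspose_mul_self B).isHermitian.eigenvalues) *
      (star (Matrix.posSemidef_conjTranspose_mul_self B).isHermitian.eigenvectorUnitary :
        Matrix (Fin k) (Fin k) ℂ))⁻¹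

/-- Eigenvalues of a Hermitian matrix, in decreasing order. -/
noncomputable def eigsDesc {n : ℕ} {H : Matrix (Fin n) (Fin n) ℂ} (hH : H.IsHermitian) :
    Fin n → ℝ :=
  sortedDesc hH.eigenvalues

/-- The positive semidefinite square root `U diag(√λ) Uᴴ`. -/
noncomputable def Matrix.PosSemidef.sqrt {k : ℕ} {A : Matrix (Fin k) (Fin k) ℂ}
    (hA : A.PosSemidef) : Matrix (Fin k) (Fin k) ℂ :=
  hA.isHermitian.eigenvectorUnitary.1 *
    diagonal ((↑) ∘ Real.sqrt ∘ hA.isHermitian.eigenvalues) *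
    (star hA.isHermitian.eigenvectorUnitary : Matrix (Fin k) (Fin k) ℂ)

lemma Matrix.PosSemidef.sqrt_mul_self {k : ℕ} {A : Matrix (Fin k) (Fin k) ℂ}
    (hA : A.PosSemidef) : hA.sqrt * hA.sqrt = A := by
  have hU : (star hA.isHermitian.eigenvectorUnitary : Matrix (Fin k) (Fin k) ℂ) *
      (hA.isHermitian.eigenvectorUnitary : Matrix (Fin k) (Fin k) ℂ) = 1 :=
    (Matrix.mem_unitaryGroup_iff').mp hA.isHermitian.eigenvectorUnitary.2
  have hD : diagonal (((↑) ∘ Real.sqrt ∘ hA.isHermitian.eigenvalues) : Fin k → ℂ) *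
      diagonal ((↑) ∘ Real.sqrt ∘ hA.isHermitian.eigenvalues) =
      diagonal (RCLike.ofReal ∘ hA.isHermitian.eigenvalues) := by
    rw [diagonal_mul_diagonal]
    congr 1
    funext i
    simp only [Function.comp_apply]
    rw [← Complex.ofReal_mul, Real.mul_self_sqrt (hA.eigenvalues_nonneg i)]
    rfl
  conv_rhs => rw [hA.isHermitian.spectral_theorem, Unitary.conjStarAlgAut_apply]
  unfold Matrix.PosSemidef.sqrt
  calc _ = (hA.isHermitian.eigenvectorUnitary : Matrix (Fin k) (Fin k) ℂ) *
        (diagonal (((↑) ∘ Real.sqrt ∘ hA.isHermitian.eigenvalues) : Fin k → ℂ) *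
          ((star hA.isHermitian.eigenvectorUnitary : Matrix (Fin k) (Fin k) ℂ) *
            (hA.isHermitian.eigenvectorUnitary : Matrix (Fin k) (Fin k) ℂ)) *
          diagonal ((↑) ∘ Real.sqrt ∘ hA.isHermitian.eigenvalues)) *
        (star hA.isHermitian.eigenvectorUnitary : Matrix (Fin k) (Fin k) ℂ) := by
        simp only [Matrix.mul_assoc]
    _ = _ := by rw [hU, Matrix.mul_one, hD]

lemma Matrix.PosSemidef.posSemidef_sqrt {k : ℕ} {A : Matrix (Fin k) (Fin k) ℂ}
    (hA : A.PosSemidef) : hA.sqrt.PosSemidef := by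
  have hdiag : (diagonal (((↑) ∘ Real.sqrt ∘ hA.isHermitian.eigenvalues) : Fin k → ℂ)).PosSemidef :=
    Matrix.posSemidef_diagonal_iff.mpr fun i => Complex.zero_le_real.mpr (Real.sqrt_nonneg _)
  have h6 := hdiag.mul_mul_conjTranspose_same
    (hA.isHermitian.eigenvectorUnitary : Matrix (Fin k) (Fin k) ℂ)
  rwa [← Matrix.star_eq_conjTranspose] at h6

lemma sum_sortedDesc' {m : ℕ} (f : Fin m → ℝ) (g : ℝ → ℝ) :
    ∑ i : Fin m, g ((f ∘ Tuple.sort f) (Fin.rev i)) = ∑ i, g (f i) := by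
  rw [← Equiv.sum_comp ((Fin.revPerm).trans (Tuple.sort f)) (fun j => g (f j))]
  rfl

lemma trace_re_nonneg {k : ℕ} {A : Matrix (Fin k) (Fin k) ℂ} (hA : A.PosSemidef) :
    0 ≤ A.trace.re := by
  rw [Matrix.trace, Complex.re_sum]
  refine Finset.sum_nonneg fun i _ => ?_
  have := hA.re_dotProduct_nonneg (Pi.single i 1)
  simpa [dotProduct, Matrix.mulVec_single, Pi.single_apply, Finset.sum_ite_eq] using this

lemma trace_eq_sum_eigs {k : ℕ} {A : Matrix (Fin k) (Fin k) ℂ} (hA : A.IsHermitian) :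
    A.trace = ∑ i, (hA.eigenvalues i : ℂ) := by
  conv_lhs => rw [hA.spectral_theorem, Unitary.conjStarAlgAut_apply]
  rw [Matrix.trace_mul_cycle]
  have h1 : (star (hA.eigenvectorUnitary : Matrix (Fin k) (Fin k) ℂ)) *
      (hA.eigenvectorUnitary : Matrix (Fin k) (Fin k) ℂ) = 1 :=
    (Matrix.mem_unitaryGroup_iff').mp hA.eigenvectorUnitary.2
  rw [h1, Matrix.one_mul, Matrix.trace_diagonal]
  rfl

lemma trace_mul_psd_nonneg {k : ℕ} {A C : Matrix (Fin k) (Fin k) ℂ}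
    (hA : A.PosSemidef) (hC : C.PosSemidef) : 0 ≤ (A * C).trace.re := by
  have h1 : A * C = A * hC.sqrt * hC.sqrt := by
    rw [Matrix.mul_assoc, hC.sqrt_mul_self]
  have h2 : (A * hC.sqrt * hC.sqrt).trace = (hC.sqrt * A * hC.sqrt).trace := by
    rw [Matrix.trace_mul_cycle, Matrix.mul_assoc]
  have h3 : (hC.sqrt * A * hC.sqrt).PosSemidef := by
    have := hA.conjTranspose_mul_mul_same hC.sqrt
    rwa [hC.posSemidef_sqrt.isHermitian.eq] at this
  rw [h1, h2]
  exact trace_re_nonneg h3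

lemma eig_le_one {k : ℕ} {G : Matrix (Fin k) (Fin k) ℂ} (hG : G.IsHermitian)
    (h1 : ((1 : Matrix (Fin k) (Fin k) ℂ) - G).PosSemidef) (i : Fin k) :
    hG.eigenvalues i ≤ 1 := by
  set v : Fin k → ℂ := ⇑(hG.eigenvectorBasis i) with hvdef
  have hb : ‖hG.eigenvectorBasis i‖ = 1 := hG.eigenvectorBasis.orthonormal.1 i
  have hn1 : RCLike.re (dotProduct (star v) v) = 1 := by
    have h2 : dotProduct (star v) v = ∑ j, (starRingEnd ℂ) (v j) * v j := rfl
    have h3 : ∑ j, ‖v j‖ ^ 2 = 1 := by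
      have h6 := EuclideanSpace.norm_eq (hG.eigenvectorBasis i)
      rw [hb] at h6
      have h5 : ∑ j, ‖hG.eigenvectorBasis i j‖ ^ 2 = ∑ j, ‖v j‖ ^ 2 := rfl
      rw [h5] at h6
      have h4 : (0:ℝ) ≤ ∑ j, ‖v j‖ ^ 2 :=
        Finset.sum_nonneg fun j _ => sq_nonneg _
      nlinarith [Real.sq_sqrt h4]
    rw [h2, RCLike.re_to_complex, Complex.re_sum]
    rw [← h3]
    refine Finset.sum_congr rfl fun j _ => ?_
    rw [Complex.sq_norm, ← Complex.normSq_eq_conj_mul_self]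
    rfl
  have hv := h1.re_dotProduct_nonneg v
  rw [Matrix.sub_mulVec, dotProduct_sub, map_sub, Matrix.one_mulVec, hn1,
    ← hG.eigenvalues_eq i] at hv
  linarith

lemma isUnit_of_rank_eq {k : ℕ} (A : Matrix (Fin k) (Fin k) ℂ) (h : A.rank = k) :
    IsUnit A := by
  rw [← Matrix.mulVec_injective_iff_isUnit]
  have hsurj : Function.Surjective A.mulVecLin := by
    rw [← LinearMap.range_eq_top]
    apply Submodule.eq_top_of_finrank_eq
    rw [← Matrix.rank, h]
    simp [Module.finrank_pi]
  exact (LinearMap.injective_iff_surjective).mpr hsurj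

lemma trace_conj_diag {k : ℕ} (U : Matrix.unitaryGroup (Fin k) ℂ) (d : Fin k → ℂ) :
    ((U : Matrix (Fin k) (Fin k) ℂ) * Matrix.diagonal d *
      (star U : Matrix (Fin k) (Fin k) ℂ)).trace = ∑ i, d i := by
  rw [Matrix.trace_mul_cycle, (Matrix.mem_unitaryGroup_iff').mp U.2, Matrix.one_mul,
    Matrix.trace_diagonal]

lemma ciInf_sortedDesc_le {m : ℕ} [NeZero m] (f : Fin m → ℝ) (i : Fin m) :
    (⨅ j, sortedDesc f j) ≤ f i := by
  have hbdd : BddBelow (Set.range (sortedDesc f)) := (Set.finite_range _).bddBelow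
  have h := ciInf_le hbdd (Fin.rev ((Tuple.sort f).symm i))
  exact h.trans (le_of_eq (by simp [sortedDesc, Fin.rev_rev]))

lemma exists_ciInf_sortedDesc {m : ℕ} [NeZero m] (f : Fin m → ℝ) :
    ∃ i, (⨅ j, sortedDesc f j) = f i := by
  obtain ⟨j0, hj0⟩ := Finite.exists_min (sortedDesc f)
  refine ⟨Tuple.sort f (Fin.rev j0), ?_⟩
  have h1 : (⨅ j, sortedDesc f j) = sortedDesc f j0 :=
    le_antisymm (ciInf_le ((Set.finite_range _).bddBelow) j0) (le_ciInf hj0)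
  rw [h1]; rfl

theorem sinTheta_le_eps {n k : ℕ} (hkn : k ≤ n) (B P : Matrix (Fin n) (Fin k) ℂ)
    (hrank : B.rank = k) (hP : Pᴴ * P = 1) :
    sinThetaF P (polarFactor B) ≤
      Real.sqrt (2 * (trNorm B - (Matrix.trace (Pᴴ * B)).re) / smin B) := by
  classical
  rcases Nat.eq_zero_or_pos k with hk0 | hkpos
  · subst hk0
    have : sinThetaF P (polarFactor B) = 0 := by
      simp [sinThetaF]
    rw [this]
    exact Real.sqrt_nonneg _
  have : NeZero k := ⟨hkpos.ne'⟩
  -- Setup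
  set hH : (Bᴴ * B).PosSemidef := Matrix.posSemidef_conjTranspose_mul_self B with hHdef
  set lam : Fin k → ℝ := hH.isHermitian.eigenvalues with hlamdef
  set S : Matrix (Fin k) (Fin k) ℂ := hH.sqrt with hSdef
  have hSH : Sᴴ = S := hH.posSemidef_sqrt.isHermitian
  have hSS : S * S = Bᴴ * B := hH.sqrt_mul_self
  -- invertibility
  have hHrank : (Bᴴ * B).rank = k := by rw [Matrix.rank_conjTranspose_mul_self, hrank]
  have hHunit : IsUnit (Bᴴ * B) := isUnit_of_rank_eq _ hHrank
  have hdetH : IsUnit (Bᴴ * B).det := (Matrix.isUnit_iff_isUnit_det _).mp hHunit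
  have hlam_pos : ∀ i, 0 < lam i := by
    intro i
    rcases (hH.eigenvalues_nonneg i).lt_or_eq with h | h
    · exact h
    · exfalso
      rw [hH.isHermitian.det_eq_prod_eigenvalues] at hdetH
      have hzero : (lam i : ℂ) = 0 := by
        rw [show lam i = 0 from h.symm]; norm_num
      rw [Finset.prod_eq_zero (Finset.mem_univ i) hzero] at hdetH
      exact not_isUnit_zero hdetH
  have hdetS : IsUnit S.det := by
    have h1 : IsUnit (S.det * S.det) := by
      rw [← Matrix.det_mul, hSS]; exact hdetH
    exact isUnit_of_mul_isUnit_left h1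
  have hSinvS : S⁻¹ * S = 1 := Matrix.nonsing_inv_mul S hdetS
  have hSSinv : S * S⁻¹ = 1 := Matrix.mul_nonsing_inv S hdetS
  have hSinvH : (S⁻¹)ᴴ = S⁻¹ := by rw [Matrix.conjTranspose_nonsing_inv, hSH]
  -- polar factor
  set Ps : Matrix (Fin n) (Fin k) ℂ := polarFactor B with hPsdef
  have hPsEq : Ps = B * S⁻¹ := rfl
  have hBPs : Bᴴ * (B * S⁻¹) = S := by
    calc Bᴴ * (B * S⁻¹) = (Bᴴ * B) * S⁻¹ := (Matrix.mul_assoc _ _ _).symm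
    _ = (S * S) * S⁻¹ := by rw [hSS]
    _ = S * (S * S⁻¹) := Matrix.mul_assoc _ _ _
    _ = S := by rw [hSSinv, Matrix.mul_one]
  have hPsPs : Psᴴ * Ps = 1 := by
    rw [hPsEq, Matrix.conjTranspose_mul, hSinvH, Matrix.mul_assoc, hBPs, hSinvS]
  -- M and G
  set M : Matrix (Fin k) (Fin k) ℂ := Pᴴ * Ps with hMdef
  set hG : (Mᴴ * M).PosSemidef := Matrix.posSemidef_conjTranspose_mul_self M with hGdef
  set mu : Fin k → ℝ := hG.isHermitian.eigenvalues with hmudef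
  have hMH : Mᴴ = Psᴴ * P := by
    rw [hMdef, Matrix.conjTranspose_mul, Matrix.conjTranspose_conjTranspose]
  -- 1 - G psd
  have hQ : ((1 : Matrix (Fin n) (Fin n) ℂ) - P * Pᴴ).PosSemidef := by
    have hproj : P * Pᴴ * (P * Pᴴ) = P * Pᴴ := by
      calc P * Pᴴ * (P * Pᴴ) = P * ((Pᴴ * P) * Pᴴ) := by
            rw [Matrix.mul_assoc, ← Matrix.mul_assoc Pᴴ P Pᴴ]
      _ = P * Pᴴ := by rw [hP, Matrix.one_mul]
    have h2 : ((1 : Matrix (Fin n) (Fin n) ℂ) - P * Pᴴ)ᴴ *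
        ((1 : Matrix (Fin n) (Fin n) ℂ) - P * Pᴴ) = 1 - P * Pᴴ := by
      simp only [Matrix.conjTranspose_sub, Matrix.conjTranspose_one, Matrix.conjTranspose_mul,
        Matrix.conjTranspose_conjTranspose, Matrix.sub_mul, Matrix.mul_sub,
        Matrix.one_mul, Matrix.mul_one, hproj]
      abel
    rw [← h2]
    exact Matrix.posSemidef_conjTranspose_mul_self _
  have h1G : ((1 : Matrix (Fin k) (Fin k) ℂ) - Mᴴ * M).PosSemidef := by
    have h3 := hQ.conjTranspose_mul_mul_same Ps
    have h4 : Psᴴ * ((1 : Matrix (Fin n) (Fin n) ℂ) - P * Pᴴ) * Ps = 1 - Mᴴ * M := by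
      rw [Matrix.mul_sub, Matrix.mul_one, Matrix.sub_mul, hPsPs, hMH, hMdef]
      congr 1
      rw [Matrix.mul_assoc, Matrix.mul_assoc, Matrix.mul_assoc]
    rwa [h4] at h3
  have hmu0 : ∀ i, 0 ≤ mu i := hG.eigenvalues_nonneg
  have hmu1 : ∀ i, mu i ≤ 1 := eig_le_one hG.isHermitian h1G
  -- sinThetaF value
  have hsum_sin : ∑ i, Real.sin (Real.arccos (sv (Pᴴ * Ps) i)) ^ 2
      = (k : ℝ) - ((Mᴴ * M).trace).re := by
    have h1 : ∑ i, Real.sin (Real.arccos (sv (Pᴴ * Ps) i)) ^ 2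
        = ∑ j, Real.sin (Real.arccos (Real.sqrt (mu j))) ^ 2 := by
      simp only [sv, sortedDesc]
      exact sum_sortedDesc' _ (fun x => Real.sin (Real.arccos x) ^ 2)
    rw [h1]
    have h2 : ∀ j, Real.sin (Real.arccos (Real.sqrt (mu j))) ^ 2 = 1 - mu j := by
      intro j
      rw [Real.sin_arccos, Real.sq_sqrt (hmu0 j),
        Real.sq_sqrt (by linarith [hmu1 j] : (0:ℝ) ≤ 1 - mu j)]
    simp only [h2]
    have h4 : ((Mᴴ * M).trace).re = ∑ j, mu j := by
      rw [trace_eq_sum_eigs hG.isHermitian, Complex.re_sum]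
      simp
      rfl
    rw [Finset.sum_sub_distrib, Finset.sum_const, Finset.card_univ, Fintype.card_fin, h4]
    simp [nsmul_eq_mul]
  -- trace of S
  have htrS : S.trace = ∑ i, ((Real.sqrt (lam i) : ℝ) : ℂ) :=
    trace_conj_diag hH.isHermitian.eigenvectorUnitary
      (fun i => ((Real.sqrt (lam i) : ℝ) : ℂ))
  have htrNorm : trNorm B = (S.trace).re := by
    rw [htrS, Complex.re_sum]
    simp only [Complex.ofReal_re]
    simp only [trNorm, sv, sortedDesc]
    exact sum_sortedDesc' _ (fun x => x)
  -- smin facts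
  have hc_le : ∀ i, smin B ≤ Real.sqrt (lam i) := fun i => ciInf_sortedDesc_le _ i
  have hc_pos : 0 < smin B := by
    obtain ⟨i, hi⟩ := exists_ciInf_sortedDesc (fun j =>
      Real.sqrt ((Matrix.posSemidef_conjTranspose_mul_self B).isHermitian.eigenvalues j))
    have h5 : smin B = Real.sqrt (lam i) := hi
    rw [h5]
    exact Real.sqrt_pos.mpr (hlam_pos i)
  set c : ℝ := smin B with hcdef
  -- S - c • 1 is psd
  have hSc : (S - (c : ℂ) • (1 : Matrix (Fin k) (Fin k) ℂ)).PosSemidef := by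
    have key : S - (c : ℂ) • (1 : Matrix (Fin k) (Fin k) ℂ) =
        (hH.isHermitian.eigenvectorUnitary : Matrix (Fin k) (Fin k) ℂ) *
        Matrix.diagonal (fun i => ((Real.sqrt (lam i) - c : ℝ) : ℂ)) *
        (star hH.isHermitian.eigenvectorUnitary : Matrix (Fin k) (Fin k) ℂ) := by
      have hU : ((hH.isHermitian.eigenvectorUnitary : Matrix (Fin k) (Fin k) ℂ)) *
          (star hH.isHermitian.eigenvectorUnitary : Matrix (Fin k) (Fin k) ℂ) = 1 :=
        (Matrix.mem_unitaryGroup_iff).mp hH.isHermitian.eigenvectorUnitary.2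
      have hD : Matrix.diagonal (fun i => ((Real.sqrt (lam i) - c : ℝ) : ℂ))
          = Matrix.diagonal ((↑) ∘ Real.sqrt ∘ lam) - (c : ℂ) • 1 := by
        rw [Matrix.smul_one_eq_diagonal, Matrix.diagonal_sub]
        congr with i
        push_cast
        rfl
      have e1 : (hH.isHermitian.eigenvectorUnitary : Matrix (Fin k) (Fin k) ℂ) *
          ((c : ℂ) • (1 : Matrix (Fin k) (Fin k) ℂ)) *
          (star hH.isHermitian.eigenvectorUnitary : Matrix (Fin k) (Fin k) ℂ)
          = (c : ℂ) • (1 : Matrix (Fin k) (Fin k) ℂ) := by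
        rw [Matrix.mul_smul, Matrix.mul_one, Matrix.smul_mul, hU]
      have e2 : S = (hH.isHermitian.eigenvectorUnitary : Matrix (Fin k) (Fin k) ℂ) *
          Matrix.diagonal (Complex.ofReal ∘ Real.sqrt ∘ lam) *
          (star hH.isHermitian.eigenvectorUnitary : Matrix (Fin k) (Fin k) ℂ) := rfl
      rw [hD, Matrix.mul_sub, Matrix.sub_mul, e1, ← e2]
    rw [key]
    have hdiag : (Matrix.diagonal (fun i => ((Real.sqrt (lam i) - c : ℝ) : ℂ))).PosSemidef := by
      rw [Matrix.posSemidef_diagonal_iff]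
      intro i
      rw [Complex.zero_le_real]
      linarith [hc_le i]
    have h6 := hdiag.mul_mul_conjTranspose_same
      (hH.isHermitian.eigenvectorUnitary : Matrix (Fin k) (Fin k) ℂ)
    rwa [← Matrix.star_eq_conjTranspose] at h6
  -- inequality (i)
  have h_i : 0 ≤ (k:ℝ) - 2 * (M.trace).re + ((Mᴴ * M).trace).re := by
    have h0 := trace_re_nonneg (Matrix.posSemidef_conjTranspose_mul_self (1 - M))
    have hexp : (1 - M)ᴴ * (1 - M) = 1 - M - Mᴴ + Mᴴ * M := by
      simp only [Matrix.conjTranspose_sub, Matrix.conjTranspose_one, Matrix.sub_mul,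
        Matrix.mul_sub, Matrix.one_mul, Matrix.mul_one]
      abel
    rw [hexp, Matrix.trace_add, Matrix.trace_sub, Matrix.trace_sub,
      Matrix.trace_conjTranspose, Matrix.trace_one] at h0
    simp only [Complex.add_re, Complex.sub_re, Complex.natCast_re,
      Complex.star_def, Complex.conj_re, Fintype.card_fin] at h0
    linarith
  -- inequality (ii)
  have hMS : M * S = Pᴴ * B := by
    rw [hMdef, hPsEq, Matrix.mul_assoc Pᴴ (B * S⁻¹) S, Matrix.mul_assoc B S⁻¹ S,
      hSinvS, Matrix.mul_one]
  have hMHS : (Mᴴ * S).trace = star ((M * S).trace) := by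
    have h7 : Mᴴ * S = (Sᴴ * M)ᴴ := by
      conv_rhs => rw [Matrix.conjTranspose_mul, Matrix.conjTranspose_conjTranspose]
    rw [h7, Matrix.trace_conjTranspose, hSH, Matrix.trace_mul_comm]
  have h_ii : c * ((k:ℝ) - (M.trace).re) ≤ (S.trace).re - ((M * S).trace).re := by
    have h0 := trace_mul_psd_nonneg (Matrix.posSemidef_conjTranspose_mul_self (P - Ps)) hSc
    have hWeq : (P - Ps)ᴴ * (P - Ps) = (1 - M) + (1 - Mᴴ) := by
      simp only [Matrix.conjTranspose_sub, Matrix.sub_mul, Matrix.mul_sub, hP, hPsPs]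
      rw [← hMdef, ← hMH]
      abel
    rw [hWeq] at h0
    have hexp2 : ((1 - M) + (1 - Mᴴ)) * (S - (c : ℂ) • (1 : Matrix (Fin k) (Fin k) ℂ))
        = (S - M * S) + (S - Mᴴ * S)
          - (c : ℂ) • ((1 - M) + (1 - Mᴴ)) := by
      simp only [Matrix.add_mul, Matrix.sub_mul, Matrix.mul_sub, Matrix.one_mul,
        Matrix.mul_one, Matrix.mul_smul, smul_sub, smul_add]
    rw [hexp2] at h0
    rw [Matrix.trace_sub, Matrix.trace_add, Matrix.trace_sub, Matrix.trace_sub,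
      Matrix.trace_smul, Matrix.trace_add, Matrix.trace_sub, Matrix.trace_sub,
      Matrix.trace_conjTranspose, Matrix.trace_one, hMHS] at h0
    simp only [Complex.add_re, Complex.sub_re, Complex.natCast_re, Complex.smul_re,
      Complex.star_def, Complex.conj_re, smul_eq_mul, Complex.mul_re,
      Complex.ofReal_re, Complex.ofReal_im, zero_mul, sub_zero, Fintype.card_fin] at h0
    linarith
  -- final assembly
  have hgoal2 : (k:ℝ) - ((Mᴴ * M).trace).re
      ≤ 2 * (trNorm B - ((Pᴴ * B).trace).re) / c := by
    rw [le_div_iff₀ hc_pos, htrNorm, ← hMS]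
    nlinarith [mul_nonneg hc_pos.le h_i, h_ii]
  have hfin : sinThetaF P Ps = Real.sqrt ((k:ℝ) - ((Mᴴ * M).trace).re) := by
    rw [sinThetaF, hsum_sin]
  rw [hfin]
  exact Real.sqrt_le_sqrt hgoal2
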